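/- Let q ≥ 5 be an odd prime power and let p_1(x), p_2(x), p_3(x) be pairwise distinct monic irreducible quadratic polynomials in F_q[x]. Then the following are equivalent: (i) there exist pairs (a_1,b_1), (a_2,b_2), (a_3,b_3) ∈ F_q²∖{(0,0)} and polynomials f_2, f_3 ∈ F_q[x] of degree at most q−4 such that (a_1+b_1x)/p_1(x) = (a_2+b_2x)/p_2(x) + f_2(x) and (a_1+b_1x)/p_1(x) = (a_3+b_3x)/p_3(x) + f_3(x) for all x ∈ F_q; (ii) there exists c ∈ F_q∖{0,1} with p_1(x) = c·p_2(x) + (1−c)·p_3(x). Moreover, such c, when it exists, is unique. -/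

import Mathlib

open Polynomial

set_option linter.unusedSectionVars false
set_option linter.unusedVariables false
set_option maxHeartbeats 1600000

section Aux

variable {F : Type*} [Field F] [Fintype F] [DecidableEq F]

lemma aux_unit_dvd_cancel {R : Type*} [CommRing R] {a b c : R} (h : IsUnit a)
    (hd : c ∣ a * b) : c ∣ b := by
  obtain ⟨a', ha⟩ := isUnit_iff_exists_inv.mp h
  have hb : b = a' * (a * b) := by rw [← mul_assoc, mul_comm a' a, ha, one_mul]
  rw [hb]; exact hd.mul_left a'

lemma aux_eval_ne_zero_of_irr {p : F[X]} (hirr : Irreducible p) (hd : p.natDegree = 2) (x : F) :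
    p.eval x ≠ 0 := by
  intro h
  obtain ⟨g, hg⟩ := dvd_iff_isRoot.mpr h
  have hp0 : p ≠ 0 := fun h0 => by simp [h0] at hd
  have hg0 : g ≠ 0 := by rintro rfl; simp at hg; exact hp0 hg
  rcases hirr.isUnit_or_isUnit hg with h1 | h2
  · exact (Polynomial.not_isUnit_X_sub_C x) h1
  · have h3 : g.natDegree = 0 := natDegree_eq_zero_of_isUnit h2
    have h4 : p.natDegree = 1 := by
      rw [hg, natDegree_mul (X_sub_C_ne_zero x) hg0, natDegree_X_sub_C, h3]
    omega

lemma aux_not_dvd {p q : F[X]} (hp : p.Monic) (hq : q.Monic) (hip : Irreducible p)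
    (hiq : Irreducible q) (hne : p ≠ q) : ¬ p ∣ q := fun hdvd =>
  hne (eq_of_monic_of_associated hp hq (hip.associated_of_dvd hiq hdvd))

lemma aux_coprime {p q : F[X]} (hp : p.Monic) (hq : q.Monic) (hip : Irreducible p)
    (hiq : Irreducible q) (hne : p ≠ q) : IsCoprime p q :=
  (Irreducible.coprime_iff_not_dvd hip).mpr (aux_not_dvd hp hq hip hiq hne)

lemma aux_monicM : (X ^ Fintype.card F - X : F[X]).Monic := by
  have h1 : (1:ℕ) < Fintype.card F := Fintype.one_lt_card
  exact monic_X_pow_sub (by rw [degree_X]; exact_mod_cast h1)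

lemma aux_vanish_dvd {P : F[X]} (h : ∀ x : F, P.eval x = 0) :
    (X ^ Fintype.card F - X : F[X]) ∣ P := by
  have hm : (X ^ Fintype.card F - X : F[X]).Monic := aux_monicM
  have hMdeg : (X ^ Fintype.card F - X : F[X]).natDegree = Fintype.card F :=
    FiniteField.X_pow_card_sub_X_natDegree_eq F Fintype.one_lt_card
  set M : F[X] := X ^ Fintype.card F - X with hM
  have hsplit := modByMonic_add_div P M
  have hr : P %ₘ M = 0 := by
    apply Polynomial.eq_zero_of_natDegree_lt_card_of_eval_eq_zero _ (Function.injective_id)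
    · intro x
      have hMx : M.eval x = 0 := by simp [hM, FiniteField.pow_card]
      have := congrArg (eval x) hsplit
      simp only [eval_add, eval_mul, hMx, zero_mul, add_zero, h x, id] at this ⊢
      exact this
    · by_cases h0 : P %ₘ M = 0
      · simp [h0, Fintype.card_pos]
      · have := degree_modByMonic_lt P hm
        have := Polynomial.natDegree_lt_natDegree h0 this
        omega
  refine ⟨P /ₘ M, ?_⟩
  nth_rewrite 1 [← hsplit]
  rw [hr, zero_add]

lemma aux_two_ne_zero (hodd : Odd (Fintype.card F)) : (2 : F) ≠ 0 := by
  intro h2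
  have hchar : CharP F (ringChar F) := ringChar.charP F
  have hdvd : ringChar F ∣ 2 := by
    rw [← CharP.cast_eq_zero_iff F (ringChar F) 2]; exact_mod_cast h2
  have hprime : (ringChar F).Prime := CharP.char_is_prime F (ringChar F)
  have h2' : ringChar F = 2 := ((Nat.prime_dvd_prime_iff_eq hprime Nat.prime_two).mp hdvd)
  obtain ⟨n, hp, hcard⟩ := FiniteField.card F (ringChar F)
  rw [h2'] at hcard
  have : (2:ℕ) ∣ Fintype.card F := hcard ▸ dvd_pow_self 2 (by exact_mod_cast n.ne_zero)
  rw [Nat.odd_iff] at hodd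
  omega

lemma aux_coeff2 {p : F[X]} (hm : p.Monic) (hd : p.natDegree = 2) : p.coeff 2 = 1 := by
  have := hm.coeff_natDegree; rwa [hd] at this

lemma aux_shape {p : F[X]} (hm : p.Monic) (hd : p.natDegree = 2) :
    p = X ^ 2 + C (p.coeff 1) * X + C (p.coeff 0) := by
  have h2 : p.coeff 2 = 1 := aux_coeff2 hm hd
  have hle : (p - X ^ 2).natDegree ≤ 1 := by
    rw [natDegree_le_iff_coeff_eq_zero]
    intro N hN
    rcases eq_or_lt_of_le (show 2 ≤ N by omega) with h | h
    · simp [← h, h2, coeff_X_pow]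
    · rw [coeff_sub, coeff_X_pow, if_neg (by omega),
        coeff_eq_zero_of_natDegree_lt (by omega), sub_zero]
  have hsh := eq_X_add_C_of_natDegree_le_one hle
  have hc1 : (p - X ^ 2).coeff 1 = p.coeff 1 := by simp [coeff_X_pow]
  have hc0 : (p - X ^ 2).coeff 0 = p.coeff 0 := by simp [coeff_X_pow]
  rw [hc1, hc0] at hsh
  linear_combination hsh

lemma aux_frob {p : F[X]} (hm : p.Monic) (hirr : Irreducible p) (hd : p.natDegree = 2) :
    p ∣ (X ^ Fintype.card F + X + C (p.coeff 1)) := by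
  haveI : Fact (Irreducible p) := ⟨hirr⟩
  set q := Fintype.card F with hq
  set K := AdjoinRoot p with hK
  set α : K := AdjoinRoot.root p with hα
  have hroot : (aeval α) p = 0 := by
    rw [aeval_def]; exact AdjoinRoot.eval₂_root p
  obtain ⟨n, hpr, hcard⟩ := FiniteField.card F (ringChar F)
  haveI : CharP K (ringChar F) :=
    charP_of_injective_algebraMap (algebraMap F K).injective (ringChar F)
  haveI : ExpChar K (ringChar F) := ExpChar.prime hpr
  set φ : K →+* K := iterateFrobenius K (ringChar F) (n : ℕ) with hφ
  have hφdef : ∀ z : K, φ z = z ^ q := by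
    intro z; rw [hφ, iterateFrobenius_def, hq, hcard]
  have hφalg : ∀ c : F, φ (algebraMap F K c) = algebraMap F K c := by
    intro c
    rw [hφdef, ← map_pow, FiniteField.pow_card]
  have hrootβ : (aeval (α ^ q)) p = 0 := by
    have h1 : φ ((aeval α) p) = eval₂ (φ.comp (algebraMap F K)) (φ α) p := by
      rw [aeval_def, hom_eval₂]
    have h2 : φ.comp (algebraMap F K) = algebraMap F K := by
      ext c; exact hφalg c
    rw [hroot, map_zero, h2, hφdef α] at h1
    rw [aeval_def]
    exact h1.symm
  have hminpoly : minpoly F α = p :=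
    (minpoly.eq_of_irreducible_of_monic hirr hroot hm).symm
  have hne : α ≠ α ^ q := by
    intro heq
    have hzero : (aeval α) (X ^ q - X : F[X]) = 0 := by
      simp [map_sub, ← heq]
    have hdvd := minpoly.dvd F α hzero
    rw [hminpoly] at hdvd
    obtain ⟨g, hg⟩ := hdvd
    have hXq0 : (X ^ q - X : F[X]) ≠ 0 :=
      FiniteField.X_pow_card_sub_X_ne_zero F Fintype.one_lt_card
    have hg0 : g ≠ 0 := by rintro rfl; simp at hg; exact hXq0 hg
    have hp0 : p ≠ 0 := hm.ne_zero
    have hdeg : (X ^ q - X : F[X]).natDegree = q :=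
      FiniteField.X_pow_card_sub_X_natDegree_eq F Fintype.one_lt_card
    have hdegg : g.natDegree = q - 2 := by
      have := natDegree_mul hp0 hg0
      rw [← hg, hdeg, hd] at this
      omega
    have hgvanish : ∀ x : F, g.eval x = 0 := by
      intro x
      have h1 : (X ^ q - X : F[X]).eval x = 0 := by simp [hq, FiniteField.pow_card]
      rw [hg, eval_mul] at h1
      exact (mul_eq_zero.mp h1).resolve_left (aux_eval_ne_zero_of_irr hirr hd x)
    have : g = 0 := by
      apply Polynomial.eq_zero_of_natDegree_lt_card_of_eval_eq_zero g Function.injective_id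
        hgvanish
      rw [hdegg]
      have : 2 ≤ q := Fintype.one_lt_card
      omega
    exact hg0 this
  have hshape := aux_shape hm hd
  have hsum : α ^ q + α + algebraMap F K (p.coeff 1) = 0 := by
    have h1 : α ^ 2 + algebraMap F K (p.coeff 1) * α + algebraMap F K (p.coeff 0) = 0 := by
      have h0 : (aeval α) (X ^ 2 + C (p.coeff 1) * X + C (p.coeff 0) : F[X]) = 0 := by
        rw [← hshape]; exact hroot
      simpa [map_add, map_mul, map_pow, aeval_X, aeval_C] using h0
    have h2 : (α ^ q) ^ 2 + algebraMap F K (p.coeff 1) * (α ^ q)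
        + algebraMap F K (p.coeff 0) = 0 := by
      have h0 : (aeval (α ^ q)) (X ^ 2 + C (p.coeff 1) * X + C (p.coeff 0) : F[X]) = 0 := by
        rw [← hshape]; exact hrootβ
      simpa [map_add, map_mul, map_pow, aeval_X, aeval_C] using h0
    have h3 : (α - α ^ q) * (α + α ^ q + algebraMap F K (p.coeff 1)) = 0 := by
      linear_combination h1 - h2
    have h4 : α - α ^ q ≠ 0 := sub_ne_zero.mpr hne
    have := (mul_eq_zero.mp h3).resolve_left h4
    linear_combination this
  have hzero : (aeval α) (X ^ q + X + C (p.coeff 1) : F[X]) = 0 := by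
    simp only [map_add, map_pow, aeval_X, aeval_C]
    linear_combination hsum
  have hfin := minpoly.dvd F α hzero
  rwa [hminpoly] at hfin

lemma aux_lin_ne_zero {a b : F} (hab : (a, b) ≠ (0, 0)) : (C a + C b * X : F[X]) ≠ 0 := by
  intro h0
  apply hab
  have h1 : (C a + C b * X : F[X]).coeff 0 = 0 := by rw [h0]; simp
  have h2 : (C a + C b * X : F[X]).coeff 1 = 0 := by rw [h0]; simp
  simp only [coeff_add, coeff_C, coeff_C_mul, coeff_X_zero, coeff_X_one, if_pos rfl,
    mul_zero, mul_one, add_zero, if_neg one_ne_zero, zero_add, if_true] at h1 h2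
  simp_all

lemma aux_lin_deg (a b : F) : (C a + C b * X : F[X]).natDegree ≤ 1 := by
  apply (natDegree_add_le _ _).trans
  apply max_le (by simp)
  exact natDegree_mul_le.trans (by simp)

lemma aux_extract {p1 p2 : F[X]} (hm1 : p1.Monic) (hi1 : Irreducible p1) (hd1 : p1.natDegree = 2)
    (hm2 : p2.Monic) (hi2 : Irreducible p2) (hd2 : p2.natDegree = 2) (hne : p1 ≠ p2)
    (hq5 : 5 ≤ Fintype.card F)
    {a1 b1 a2 b2 : F} (hab : (a1, b1) ≠ (0,0)) {f : F[X]}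
    (hf : f.degree ≤ ((Fintype.card F - 4 : ℕ) : WithBot ℕ))
    (heq : ∀ x : F, (a1 + b1 * x) / p1.eval x = (a2 + b2 * x) / p2.eval x + f.eval x) :
    ∃ lam : F, lam ≠ 0 ∧
      p1 ∣ (C a1 + C b1 * X) * p2 - C lam * (X ^ Fintype.card F - X) := by
  have hq2 : (1:ℕ) < Fintype.card F := Fintype.one_lt_card
  set q := Fintype.card F with hqdef
  set L : F[X] := C a1 + C b1 * X with hLdef
  set Mp : F[X] := C a2 + C b2 * X with hMpdef
  have hL0 : L ≠ 0 := aux_lin_ne_zero hab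
  have hp1x := aux_eval_ne_zero_of_irr hi1 hd1
  have hp2x := aux_eval_ne_zero_of_irr hi2 hd2
  set P : F[X] := L * p2 - Mp * p1 - f * (p1 * p2) with hPdef
  have hvanish : ∀ x : F, P.eval x = 0 := by
    intro x
    have h := heq x
    have e1 : p1.eval x ≠ 0 := hp1x x
    have e2 : p2.eval x ≠ 0 := hp2x x
    field_simp at h
    simp only [hPdef, hLdef, hMpdef, eval_sub, eval_mul, eval_add, eval_C, eval_X]
    linear_combination h
  obtain ⟨g, hg⟩ := aux_vanish_dvd hvanish
  have hfdeg : f.natDegree ≤ q - 4 := natDegree_le_iff_degree_le.mpr hf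
  have hPdeg : P.natDegree ≤ q := by
    have d1 : (L * p2).natDegree ≤ 3 := by
      apply natDegree_mul_le.trans
      have := aux_lin_deg a1 b1
      rw [← hLdef] at this; omega
    have d2 : (Mp * p1).natDegree ≤ 3 := by
      apply natDegree_mul_le.trans
      have := aux_lin_deg a2 b2
      rw [← hMpdef] at this; omega
    have d3 : (f * (p1 * p2)).natDegree ≤ q := by
      apply natDegree_mul_le.trans
      have : (p1 * p2).natDegree ≤ 4 := natDegree_mul_le.trans (by omega)
      omega
    calc P.natDegree ≤ max (L * p2 - Mp * p1).natDegree (f * (p1 * p2)).natDegree :=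
          natDegree_sub_le _ _
      _ ≤ max (max (L * p2).natDegree (Mp * p1).natDegree) (f * (p1 * p2)).natDegree := by
          apply max_le_max_right
          exact natDegree_sub_le _ _
      _ ≤ q := by omega
  have hXq0 : (X ^ q - X : F[X]) ≠ 0 := FiniteField.X_pow_card_sub_X_ne_zero F hq2
  have hXqdeg : (X ^ q - X : F[X]).natDegree = q :=
    FiniteField.X_pow_card_sub_X_natDegree_eq F hq2
  have hgC : g = C (g.coeff 0) := by
    by_cases hg0 : g = 0
    · simp [hg0]
    · have hmul := natDegree_mul hXq0 hg0
      rw [← hg, hXqdeg] at hmul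
      have : g.natDegree = 0 := by omega
      exact eq_C_of_natDegree_le_zero (le_of_eq this)
  set lam := g.coeff 0 with hlam
  rw [hgC] at hg
  rw [hPdef] at hg
  have hkey : L * p2 - C lam * (X ^ q - X) = Mp * p1 + f * (p1 * p2) := by
    linear_combination hg
  have hp1prime : Prime p1 := hi1.prime
  have hnd12 : ¬ p1 ∣ p2 := aux_not_dvd hm1 hm2 hi1 hi2 hne
  refine ⟨lam, ?_, ?_⟩
  · intro h0
    rw [h0, map_zero, zero_mul, sub_zero] at hkey
    have hdvdL : p1 ∣ L * p2 := by
      rw [hkey]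
      exact dvd_add (dvd_mul_left p1 Mp) ⟨f * p2, by ring⟩
    have := (hp1prime.dvd_mul.mp hdvdL).resolve_right hnd12
    have h2 := natDegree_le_of_dvd this hL0
    have h3 := aux_lin_deg a1 b1
    rw [← hLdef] at h3
    omega
  · rw [hkey]
    exact dvd_add (dvd_mul_left p1 Mp) ⟨f * p2, by ring⟩

lemma aux_construct {p1 p2 : F[X]}
    (hm1 : p1.Monic) (hi1 : Irreducible p1) (hd1 : p1.natDegree = 2)
    (hm2 : p2.Monic) (hi2 : Irreducible p2) (hd2 : p2.natDegree = 2) (hne : p1 ≠ p2)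
    (hq5 : 5 ≤ Fintype.card F) (hodd : Odd (Fintype.card F))
    {L : F[X]} (hL0 : L ≠ 0) (hLdeg : L.natDegree ≤ 1) {lam : F} (hlam : lam ≠ 0)
    (hdvd : p1 ∣ L * p2 - C lam * (X ^ Fintype.card F - X)) :
    ∃ a2 b2 : F, (a2, b2) ≠ (0, 0) ∧ ∃ f : F[X],
      f.degree ≤ ((Fintype.card F - 4 : ℕ) : WithBot ℕ) ∧
      ∀ x : F, L.eval x / p1.eval x = (a2 + b2 * x) / p2.eval x + f.eval x := by
  have hq2 : (1:ℕ) < Fintype.card F := Fintype.one_lt_card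
  set q := Fintype.card F with hqdef
  have h2F : (2:F) ≠ 0 := aux_two_ne_zero hodd
  set s2 := p2.coeff 1 with hs2
  obtain ⟨t, ht⟩ := aux_frob hm2 hi2 hd2 (F := F)
  obtain ⟨u, v, huv⟩ := aux_coprime hm2 hm1 hi2 hi1 (Ne.symm hne)
  set Mp : F[X] := (C lam * (C 2 * X + C s2) * v) %ₘ p2 with hMpdef
  have hWM : C lam * (C 2 * X + C s2) * v - Mp
      = p2 * ((C lam * (C 2 * X + C s2) * v) /ₘ p2) := by
    have h0 := modByMonic_add_div (C lam * (C 2 * X + C s2) * v) p2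
    linear_combination -h0
  have hdvd2 : p2 ∣ Mp * p1 + C lam * (X ^ q - X) := by
    refine ⟨C lam * t - ((C lam * (C 2 * X + C s2) * v) /ₘ p2) * p1
      - C lam * (C 2 * X + C s2) * u, ?_⟩
    have hC2 : (C (2:F) : F[X]) = 2 := map_ofNat C 2
    linear_combination (C lam) * ht - p1 * hWM + (C lam * (C 2 * X + C s2)) * huv
      + C lam * X * hC2
  have hdvdG1 : p1 ∣ L * p2 - Mp * p1 - C lam * (X ^ q - X) := by
    have he : L * p2 - Mp * p1 - C lam * (X ^ q - X)
        = (L * p2 - C lam * (X ^ q - X)) - Mp * p1 := by ring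
    rw [he]; exact dvd_sub hdvd (dvd_mul_left p1 Mp)
  have hdvdG2 : p2 ∣ L * p2 - Mp * p1 - C lam * (X ^ q - X) := by
    have he : L * p2 - Mp * p1 - C lam * (X ^ q - X)
        = L * p2 - (Mp * p1 + C lam * (X ^ q - X)) := by ring
    rw [he]; exact dvd_sub (dvd_mul_left p2 L) hdvd2
  obtain ⟨f, hf⟩ := (aux_coprime hm1 hm2 hi1 hi2 hne).mul_dvd hdvdG1 hdvdG2
  have hp2prime : Prime p2 := hi2.prime
  have hlin0 : (C 2 * X + C s2 : F[X]) ≠ 0 := by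
    intro h0
    have := congrArg (fun r => coeff r 1) h0
    simp at this
    exact h2F this
  have hMp0 : Mp ≠ 0 := by
    intro h0
    rw [h0, sub_zero] at hWM
    have hdvdW : p2 ∣ C lam * (C 2 * X + C s2) * v := ⟨_, hWM⟩
    rcases hp2prime.dvd_mul.mp hdvdW with h | h
    · rcases hp2prime.dvd_mul.mp h with h' | h'
      · have := natDegree_le_of_dvd h' (by simpa using hlam)
        simp [natDegree_C, hd2] at this
      · have := natDegree_le_of_dvd h' hlin0
        have hd' : (C 2 * X + C s2 : F[X]).natDegree ≤ 1 := by
          apply (natDegree_add_le _ _).trans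
          apply max_le (natDegree_mul_le.trans (by simp)) (by simp)
        omega
    · have hd1' : p2 ∣ u * p2 + v * p1 :=
        dvd_add (dvd_mul_left p2 u) (Dvd.dvd.mul_right h p1)
      rw [huv] at hd1'
      exact hp2prime.not_dvd_one hd1'
  have hMpdeg : Mp.natDegree ≤ 1 := by
    have hlt := degree_modByMonic_lt (C lam * (C 2 * X + C s2) * v) hm2
    rw [← hMpdef] at hlt
    have := natDegree_lt_natDegree hMp0 hlt
    omega
  have hMshape : Mp = C (Mp.coeff 1) * X + C (Mp.coeff 0) :=
    eq_X_add_C_of_natDegree_le_one hMpdeg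
  refine ⟨Mp.coeff 0, Mp.coeff 1, ?_, f, ?_, ?_⟩
  · intro h0
    apply hMp0
    have h1 : Mp.coeff 0 = 0 := congrArg Prod.fst h0
    have h2 : Mp.coeff 1 = 0 := congrArg Prod.snd h0
    rw [hMshape, h1, h2]; simp
  · rw [← natDegree_le_iff_degree_le]
    by_cases hf0 : f = 0
    · simp [hf0]
    have hG0 : p1 * p2 * f ≠ 0 :=
      mul_ne_zero (mul_ne_zero hm1.ne_zero hm2.ne_zero) hf0
    have hGdeg : (p1 * p2 * f).natDegree = 4 + f.natDegree := by
      rw [natDegree_mul (mul_ne_zero hm1.ne_zero hm2.ne_zero) hf0,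
        natDegree_mul hm1.ne_zero hm2.ne_zero, hd1, hd2]
    have hXqdeg : (X ^ q - X : F[X]).natDegree = q :=
      FiniteField.X_pow_card_sub_X_natDegree_eq F hq2
    have hup : (L * p2 - Mp * p1 - C lam * (X ^ q - X)).natDegree ≤ q := by
      have d1 : (L * p2).natDegree ≤ 3 := natDegree_mul_le.trans (by omega)
      have d2 : (Mp * p1).natDegree ≤ 3 := natDegree_mul_le.trans (by omega)
      have d3 : (C lam * (X ^ q - X)).natDegree ≤ q :=
        natDegree_mul_le.trans (by simp [hXqdeg])
      calc (L * p2 - Mp * p1 - C lam * (X ^ q - X)).natDegree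
          ≤ max (L * p2 - Mp * p1).natDegree (C lam * (X ^ q - X)).natDegree :=
            natDegree_sub_le _ _
        _ ≤ max (max (L * p2).natDegree (Mp * p1).natDegree)
              (C lam * (X ^ q - X)).natDegree := max_le_max_right _ (natDegree_sub_le _ _)
        _ ≤ q := by omega
    rw [hf, hGdeg] at hup
    omega
  · intro x
    have e1 : p1.eval x ≠ 0 := aux_eval_ne_zero_of_irr hi1 hd1 x
    have e2 : p2.eval x ≠ 0 := aux_eval_ne_zero_of_irr hi2 hd2 x
    have hGx := congrArg (eval x) hf
    simp only [eval_sub, eval_mul, eval_add, eval_pow, eval_C, eval_X] at hGx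
    rw [FiniteField.pow_card, sub_self, mul_zero, sub_zero] at hGx
    have ha2 : Mp.coeff 0 + Mp.coeff 1 * x = Mp.eval x := by
      conv_rhs => rw [hMshape]
      simp; ring
    field_simp
    linear_combination hGx - eval x p1 * ha2

end Aux

/-- For odd `q ≥ 5` and pairwise distinct monic irreducible quadratics
`p₁, p₂, p₃`: there is a common nonzero rational function `(a₁+b₁x)/p₁(x)` agreeing
(up to low-degree polynomials) with nonzero rational functions with denominators
`p₂` and `p₃` if and only if `p₁ = c p₂ + (1-c) p₃` for some `c ∉ {0, 1}`; moreover
such `c` is unique. -/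
theorem stmt11 {F : Type*} [Field F] [Fintype F] [DecidableEq F]
    (hq : 5 ≤ Fintype.card F) (hodd : Odd (Fintype.card F))
    (p1 p2 p3 : F[X])
    (hp1 : p1.Monic ∧ Irreducible p1 ∧ p1.natDegree = 2)
    (hp2 : p2.Monic ∧ Irreducible p2 ∧ p2.natDegree = 2)
    (hp3 : p3.Monic ∧ Irreducible p3 ∧ p3.natDegree = 2)
    (h12 : p1 ≠ p2) (h13 : p1 ≠ p3) (h23 : p2 ≠ p3) :
    ((∃ a1 b1 : F, (a1, b1) ≠ (0, 0) ∧
        (∃ a2 b2 : F, (a2, b2) ≠ (0, 0) ∧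
          ∃ f2 : F[X], f2.degree ≤ ((Fintype.card F - 4 : ℕ) : WithBot ℕ) ∧
            ∀ x : F, (a1 + b1 * x) / p1.eval x
              = (a2 + b2 * x) / p2.eval x + f2.eval x) ∧
        (∃ a3 b3 : F, (a3, b3) ≠ (0, 0) ∧
          ∃ f3 : F[X], f3.degree ≤ ((Fintype.card F - 4 : ℕ) : WithBot ℕ) ∧
            ∀ x : F, (a1 + b1 * x) / p1.eval x
              = (a3 + b3 * x) / p3.eval x + f3.eval x))
      ↔ ∃ c : F, c ≠ 0 ∧ c ≠ 1 ∧ p1 = C c * p2 + C (1 - c) * p3) ∧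
    (∀ c c' : F, c ≠ 0 → c ≠ 1 → c' ≠ 0 → c' ≠ 1 →
      p1 = C c * p2 + C (1 - c) * p3 → p1 = C c' * p2 + C (1 - c') * p3 →
      c = c') := by
  obtain ⟨hm1, hi1, hd1⟩ := hp1
  obtain ⟨hm2, hi2, hd2⟩ := hp2
  obtain ⟨hm3, hi3, hd3⟩ := hp3
  constructor
  · constructor
    · -- forward direction
      rintro ⟨a1, b1, hab1, ⟨a2, b2, hab2, f2, hf2, heq2⟩, ⟨a3, b3, hab3, f3, hf3, heq3⟩⟩
      obtain ⟨l2, hl2, hdvd2⟩ := aux_extract hm1 hi1 hd1 hm2 hi2 hd2 h12 hq hab1 hf2 heq2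
      obtain ⟨l3, hl3, hdvd3⟩ := aux_extract hm1 hi1 hd1 hm3 hi3 hd3 h13 hq hab1 hf3 heq3
      set L : F[X] := C a1 + C b1 * X with hLdef
      have hL0 : L ≠ 0 := aux_lin_ne_zero hab1
      have hp1prime : Prime p1 := hi1.prime
      have hkey : p1 ∣ L * (C l3 * p2 - C l2 * p3) := by
        have h := dvd_sub (hdvd2.mul_left (C l3)) (hdvd3.mul_left (C l2))
        have he : C l3 * (L * p2 - C l2 * (X ^ Fintype.card F - X))
            - C l2 * (L * p3 - C l3 * (X ^ Fintype.card F - X))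
            = L * (C l3 * p2 - C l2 * p3) := by ring
        rwa [he] at h
      have hndL : ¬ p1 ∣ L := by
        intro h
        have h1 := natDegree_le_of_dvd h hL0
        have h2 := aux_lin_deg a1 b1
        rw [← hLdef] at h2
        omega
      have hdvdh : p1 ∣ C l3 * p2 - C l2 * p3 := (hp1prime.dvd_mul.mp hkey).resolve_left hndL
      have hll : l2 ≠ l3 := by
        intro hll
        rw [← hll] at hdvdh
        have he : C l2 * p2 - C l2 * p3 = C l2 * (p2 - p3) := by ring
        rw [he] at hdvdh
        have h23' : p1 ∣ p2 - p3 :=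
          aux_unit_dvd_cancel (isUnit_C.mpr hl2.isUnit) hdvdh
        have hne23 : p2 - p3 ≠ 0 := sub_ne_zero.mpr h23
        have hdeg23 : (p2 - p3).natDegree ≤ 1 := by
          rw [natDegree_le_iff_coeff_eq_zero]
          intro N hN
          rw [coeff_sub]
          rcases eq_or_lt_of_le (show 2 ≤ N by omega) with h | h
          · rw [← h, aux_coeff2 hm2 hd2, aux_coeff2 hm3 hd3, sub_self]
          · rw [coeff_eq_zero_of_natDegree_lt (by omega),
              coeff_eq_zero_of_natDegree_lt (by omega), sub_self]
        have := natDegree_le_of_dvd h23' hne23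
        omega
      have hδ0 : l3 - l2 ≠ 0 := sub_ne_zero.mpr (Ne.symm hll)
      obtain ⟨w, hw⟩ := hdvdh
      have hLHSdeg : (C l3 * p2 - C l2 * p3).natDegree ≤ 2 := by
        have d1 : (C l3 * p2).natDegree ≤ 2 :=
          natDegree_mul_le.trans (by simp [natDegree_C, hd2])
        have d2 : (C l2 * p3).natDegree ≤ 2 :=
          natDegree_mul_le.trans (by simp [natDegree_C, hd3])
        exact (natDegree_sub_le _ _).trans (by omega)
      have hw0 : w ≠ 0 := by
        intro h0
        rw [h0, mul_zero] at hw
        have := congrArg (fun r => coeff r 2) hw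
        simp only [coeff_sub, coeff_C_mul, coeff_zero] at this
        rw [aux_coeff2 hm2 hd2, aux_coeff2 hm3 hd3] at this
        apply hδ0
        linear_combination this
      have hwdeg : w.natDegree = 0 := by
        have hmul := natDegree_mul hm1.ne_zero hw0
        rw [← hw, hd1] at hmul
        omega
      have hwc : w = C (w.coeff 0) := eq_C_of_natDegree_le_zero (le_of_eq hwdeg)
      rw [hwc] at hw
      have hco : w.coeff 0 = l3 - l2 := by
        have := congrArg (fun r => coeff r 2) hw
        simp only [coeff_sub, coeff_C_mul, coeff_mul_C] at this
        rw [aux_coeff2 hm2 hd2, aux_coeff2 hm3 hd3, aux_coeff2 hm1 hd1] at this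
        linear_combination -this
      rw [hco] at hw
      refine ⟨l3 / (l3 - l2), div_ne_zero hl3 hδ0, ?_, ?_⟩
      · intro h1
        rw [div_eq_one_iff_eq hδ0] at h1
        apply hl2
        linear_combination h1
      · have hCδ0 : (C (l3 - l2) : F[X]) ≠ 0 := fun h => hδ0 (C_eq_zero.mp h)
        apply mul_left_cancel₀ hCδ0
        have e1 : C (l3 - l2) * C (l3/(l3 - l2)) = C l3 := by
          rw [← C_mul]; congr 1; field_simp
        have e2 : C (l3 - l2) * C (1 - l3/(l3 - l2)) = - C l2 := by
          rw [← C_mul, ← map_neg]; congr 1; field_simp; ring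
        linear_combination (-1 : F[X]) * hw - p2 * e1 - p3 * e2
    · -- backward direction
      rintro ⟨c, hc0, hc1, hpc⟩
      have h2F : (2:F) ≠ 0 := aux_two_ne_zero hodd
      obtain ⟨t1, ht1⟩ := aux_frob hm1 hi1 hd1 (F := F)
      obtain ⟨u, v, huv⟩ := aux_coprime hm1 hm2 hi1 hi2 h12
      set s1 := p1.coeff 1 with hs1
      set W : F[X] := -(C 2 * X + C s1) * v with hWdef
      set L : F[X] := W %ₘ p1 with hLdef
      have hWM : W - L = p1 * (W /ₘ p1) := by
        have h0 := modByMonic_add_div W p1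
        linear_combination -h0
      have hC2 : (C (2:F) : F[X]) = 2 := map_ofNat C 2
      have hC1 : (C (1:F) : F[X]) = 1 := map_one C
      have hlin0 : (C 2 * X + C s1 : F[X]) ≠ 0 := by
        intro h0
        have := congrArg (fun r => coeff r 1) h0
        simp at this
        exact h2F this
      have hp1prime : Prime p1 := hi1.prime
      have hL0 : L ≠ 0 := by
        intro h0
        rw [h0, sub_zero] at hWM
        have hdvdW : p1 ∣ (C 2 * X + C s1) * v := by
          have h1 : p1 ∣ W := ⟨_, hWM⟩
          rw [hWdef, neg_mul] at h1
          exact dvd_neg.mp h1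
        rcases hp1prime.dvd_mul.mp hdvdW with h | h
        · have h1 := natDegree_le_of_dvd h hlin0
          have h2 : (C 2 * X + C s1 : F[X]).natDegree ≤ 1 := by
            apply (natDegree_add_le _ _).trans
            apply max_le (natDegree_mul_le.trans (by simp)) (by simp)
          omega
        · have hd1' : p1 ∣ u * p1 + v * p2 :=
            dvd_add (dvd_mul_left p1 u) (Dvd.dvd.mul_right h p2)
          rw [huv] at hd1'
          exact hp1prime.not_dvd_one hd1'
      have hLdeg : L.natDegree ≤ 1 := by
        have hlt := degree_modByMonic_lt W hm1
        rw [← hLdef] at hlt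
        have := natDegree_lt_natDegree hL0 hlt
        omega
      have hLp2 : p1 ∣ L * p2 - C 1 * (X ^ Fintype.card F - X) := by
        refine ⟨(C 2 * X + C s1) * u - (W /ₘ p1) * p2 - t1, ?_⟩
        linear_combination (-(X ^ Fintype.card F - X)) * hC1 + (-1 : F[X]) * ht1
          + (-p2) * hWM + (-p2) * hWdef + (-(C 2 * X + C s1)) * huv + (-X) * hC2
      have h1c : (1:F) - c ≠ 0 := sub_ne_zero.mpr (Ne.symm hc1)
      have hlam3 : c / (c - 1) ≠ 0 := div_ne_zero hc0 (sub_ne_zero.mpr hc1)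
      have hLp3 : p1 ∣ L * p3 - C (c/(c-1)) * (X ^ Fintype.card F - X) := by
        have h1c' : c - 1 ≠ 0 := sub_ne_zero.mpr hc1
        have hval : (1-c) * (c/(c-1)) + c = 0 := by
          field_simp
          ring
        have hCC : C (1-c) * C (c/(c-1)) + C c = (0:F[X]) := by
          rw [← C_mul, ← C_add, hval, map_zero]
        have hkey : C (1-c) * (L * p3 - C (c/(c-1)) * (X ^ Fintype.card F - X))
            = L * p1 - C c * (L * p2 - C 1 * (X ^ Fintype.card F - X)) := by
          linear_combination (-L) * hpc + (-(X ^ Fintype.card F - X : F[X])) * hCC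
            + (-(C c * (X ^ Fintype.card F - X : F[X]))) * hC1
        have hdvdR : p1 ∣ L * p1 - C c * (L * p2 - C 1 * (X ^ Fintype.card F - X)) :=
          dvd_sub (dvd_mul_left p1 L) (hLp2.mul_left (C c))
        rw [← hkey] at hdvdR
        exact aux_unit_dvd_cancel (isUnit_C.mpr h1c.isUnit) hdvdR
      obtain ⟨a2, b2, hab2, f2, hf2, heval2⟩ :=
        aux_construct hm1 hi1 hd1 hm2 hi2 hd2 h12 hq hodd hL0 hLdeg one_ne_zero hLp2
      obtain ⟨a3, b3, hab3, f3, hf3, heval3⟩ :=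
        aux_construct hm1 hi1 hd1 hm3 hi3 hd3 h13 hq hodd hL0 hLdeg hlam3 hLp3
      have hLsh : L = C (L.coeff 1) * X + C (L.coeff 0) :=
        eq_X_add_C_of_natDegree_le_one hLdeg
      have hx : ∀ x : F, L.eval x = L.coeff 0 + L.coeff 1 * x := by
        intro x
        conv_lhs => rw [hLsh]
        simp; ring
      refine ⟨L.coeff 0, L.coeff 1, ?_, ⟨a2, b2, hab2, f2, hf2, ?_⟩,
        ⟨a3, b3, hab3, f3, hf3, ?_⟩⟩
      · intro h0
        apply hL0
        have h1 : L.coeff 0 = 0 := congrArg Prod.fst h0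
        have h2 : L.coeff 1 = 0 := congrArg Prod.snd h0
        rw [hLsh, h1, h2]; simp
      · intro x
        have := heval2 x
        rw [hx x] at this
        exact this
      · intro x
        have := heval3 x
        rw [hx x] at this
        exact this
  · -- uniqueness
    intro c c' hc0 hc1 hc0' hc1' h h'
    by_contra hne
    have hCsub : (C (c - c') : F[X]) ≠ 0 := fun h0 =>
      hne (sub_eq_zero.mp (C_eq_zero.mp h0))
    have e1 : (C (1 - c) : F[X]) = 1 - C c := by rw [map_sub, map_one]
    have e2 : (C (1 - c') : F[X]) = 1 - C c' := by rw [map_sub, map_one]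
    have e3 : (C (c - c') : F[X]) = C c - C c' := map_sub C c c'
    have hzero : C (c - c') * (p2 - p3) = 0 := by
      linear_combination (h' - h) - p3 * e1 + p3 * e2 + (p2 - p3) * e3
    rcases mul_eq_zero.mp hzero with h0 | h0
    · exact hCsub h0
    · exact h23 (sub_eq_zero.mp h0)
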